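/- Let G be a finite group and H a subgroup with G = H·Z_n(G), where Z_n(G) is the n-th term of the upper central series. Then Z_n(H) = Z_n(G) ∩ H. -/

import Mathlib

open Subgroup
open scoped commutatorElement

section Aux

variable {G : Type*} [Group G]

-- Three subgroups lemma relative to a normal subgroup
lemma three_subgroups_normal (N A B C : Subgroup G) [N.Normal]
    (h1 : ⁅⁅B, C⁆, A⁆ ≤ N) (h2 : ⁅⁅C, A⁆, B⁆ ≤ N) : ⁅⁅A, B⁆, C⁆ ≤ N := by
  let f := QuotientGroup.mk' N
  have key : ∀ X Y Z : Subgroup G, ⁅⁅X, Y⁆, Z⁆ ≤ N ↔ ⁅⁅X.map f, Y.map f⁆, Z.map f⁆ = ⊥ := by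
    intro X Y Z
    rw [← map_commutator, ← map_commutator, Subgroup.map_eq_bot_iff, QuotientGroup.ker_mk']
  rw [key]
  exact Subgroup.commutator_commutator_eq_bot_of_rotate ((key B C A).mp h1) ((key C A B).mp h2)

lemma ucs_comm_top (m : ℕ) :
    ⁅Subgroup.upperCentralSeries G m, (⊤ : Subgroup G)⁆ ≤ Subgroup.upperCentralSeries G (m - 1) := by
  cases m with
  | zero => simp
  | succ m =>
    rw [commutator_le]
    intro x hx g _
    exact hx g

lemma lcs_succ_eq (k : ℕ) :
    (⊤ : Subgroup G).lowerCentralSeries (k + 1) = ⁅(⊤ : Subgroup G).lowerCentralSeries k, (⊤ : Subgroup G)⁆ := rfl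

lemma ucs_comm_lcs (k : ℕ) : ∀ m : ℕ,
    ⁅Subgroup.upperCentralSeries G m, (⊤ : Subgroup G).lowerCentralSeries k⁆ ≤ Subgroup.upperCentralSeries G (m - (k + 1)) := by
  induction k with
  | zero => intro m; exact ucs_comm_top m
  | succ k ih =>
    intro m
    rw [commutator_comm, lcs_succ_eq]
    refine three_subgroups_normal _ _ _ _ ?_ ?_
    · -- ⁅⁅⊤, Z_m⁆, lcs k⁆ ≤ Z_{m - (k+2)}
      calc ⁅⁅(⊤ : Subgroup G), Subgroup.upperCentralSeries G m⁆, (⊤ : Subgroup G).lowerCentralSeries k⁆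
          ≤ ⁅Subgroup.upperCentralSeries G (m - 1), (⊤ : Subgroup G).lowerCentralSeries k⁆ := by
            apply commutator_mono _ le_rfl
            rw [commutator_comm]; exact ucs_comm_top m
        _ ≤ Subgroup.upperCentralSeries G (m - 1 - (k + 1)) := ih (m - 1)
        _ ≤ Subgroup.upperCentralSeries G (m - (k + 1 + 1)) := by
            apply Subgroup.upperCentralSeries_mono; omega
    · -- ⁅⁅Z_m, lcs k⁆, ⊤⁆ ≤ Z_{m - (k+2)}
      calc ⁅⁅Subgroup.upperCentralSeries G m, (⊤ : Subgroup G).lowerCentralSeries k⁆, (⊤ : Subgroup G)⁆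
          ≤ ⁅Subgroup.upperCentralSeries G (m - (k + 1)), (⊤ : Subgroup G)⁆ :=
            commutator_mono (ih m) le_rfl
        _ ≤ Subgroup.upperCentralSeries G (m - (k + 1) - 1) := ucs_comm_top _
        _ ≤ Subgroup.upperCentralSeries G (m - (k + 1 + 1)) := by
            apply Subgroup.upperCentralSeries_mono; omega

-- easy direction
lemma ucs_inf_le (H : Subgroup G) : ∀ (n : ℕ) (x : H),
    (x : G) ∈ Subgroup.upperCentralSeries G n → x ∈ Subgroup.upperCentralSeries H n := by
  intro n
  induction n with
  | zero =>
    intro x hx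
    simp only [Subgroup.upperCentralSeries_zero, mem_bot] at *
    exact Subtype.ext hx
  | succ n ih =>
    intro x hx
    rw [Subgroup.mem_upperCentralSeries_succ_iff]
    intro y
    exact ih _ (hx (y : G))

-- hard direction core
lemma ucs_decomp (H : Subgroup G) (n : ℕ)
    (hHZ : ∀ g : G, ∃ h ∈ H, ∃ z ∈ Subgroup.upperCentralSeries G n, g = h * z) :
    ∀ (r : ℕ) (c : G), c ∈ (⊤ : Subgroup G).lowerCentralSeries (n - r) →
      (∃ u : H, u ∈ Subgroup.upperCentralSeries H r ∧ ∃ v ∈ Subgroup.upperCentralSeries G r, c = ↑u * v) →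
      c ∈ Subgroup.upperCentralSeries G r := by
  intro r
  induction r with
  | zero =>
    rintro c - ⟨u, hu, v, hv, rfl⟩
    simp only [Subgroup.upperCentralSeries_zero, mem_bot] at hu hv ⊢
    simp [hu, hv]
  | succ r ih =>
    rintro c hc ⟨u, hu, v, hv, hcuv⟩
    rw [Subgroup.mem_upperCentralSeries_succ_iff]
    intro g
    obtain ⟨h, hh, z, hz, rfl⟩ := hHZ g
    set hH : H := ⟨h, hh⟩
    have hcomm : c * (h * z) * c⁻¹ * (h * z)⁻¹ = ⁅c, h * z⁆ := rfl
    show ⁅c, h * z⁆ ∈ Subgroup.upperCentralSeries G r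
    -- decomposition
    have hu' : ⁅u, hH⁆ ∈ Subgroup.upperCentralSeries H r := hu hH
    have ha : (u : G) * ⁅v, h * z⁆ * (u : G)⁻¹ ∈ Subgroup.upperCentralSeries G r :=
      (inferInstance : (Subgroup.upperCentralSeries G r).Normal).conj_mem _ (hv (h * z)) _
    have hb1 : c * ⁅v⁻¹, z⁆ * c⁻¹ ∈ Subgroup.upperCentralSeries G r :=
      (inferInstance : (Subgroup.upperCentralSeries G r).Normal).conj_mem _ ((inv_mem hv) z) _
    have hb2 : ⁅c, z⁆ ∈ Subgroup.upperCentralSeries G r := by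
      have := ucs_comm_lcs (n - (r + 1)) n (commutator_mem_commutator hz hc)
      rw [← commutatorElement_inv] at this
      have := inv_mem this
      rw [inv_inv] at this
      exact Subgroup.upperCentralSeries_mono G (by omega) this
    have hb : h * ((c * ⁅v⁻¹, z⁆ * c⁻¹) * ⁅c, z⁆) * h⁻¹ ∈ Subgroup.upperCentralSeries G r :=
      (inferInstance : (Subgroup.upperCentralSeries G r).Normal).conj_mem _ (mul_mem hb1 hb2) _
    -- the group identity
    have hid : ⁅c, h * z⁆ =
        (⁅(u : G), h⁆ : G) *
          ((⁅(u : G), h⁆⁻¹ * ((u : G) * ⁅v, h * z⁆ * (u : G)⁻¹) * ⁅(u : G), h⁆) *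
            (h * ((c * ⁅v⁻¹, z⁆ * c⁻¹) * ⁅c, z⁆) * h⁻¹)) := by
      subst hcuv
      simp only [commutatorElement_def]
      group
    rw [hid]
    apply ih
    · -- lower central series membership
      have h1 : ⁅c, h * z⁆ ∈ (⊤ : Subgroup G).lowerCentralSeries (n - (r + 1) + 1) := by
        rw [lcs_succ_eq]
        exact commutator_mem_commutator hc (mem_top _)
      rw [← hid] at *
      exact Subgroup.lowerCentralSeries_antitone _ (by omega) h1
    · refine ⟨⁅u, hH⁆, hu', _, ?_, rfl⟩
      have ha' := (inferInstance : (Subgroup.upperCentralSeries G r).Normal).conj_mem _ ha ⁅(u : G), h⁆⁻¹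
      rw [inv_inv] at ha'
      exact mul_mem ha' hb

end Aux

theorem upperCentralSeries_subgroup_eq_inf
    {G : Type*} [Group G] [Finite G] (H : Subgroup G) (n : ℕ)
    (hHZ : ∀ g : G, ∃ h ∈ H, ∃ z ∈ _root_.upperCentralSeries G n, g = h * z) :
    (_root_.upperCentralSeries H n).map H.subtype = _root_.upperCentralSeries G n ⊓ H := by
  ext g
  simp only [Subgroup.mem_map, Subgroup.mem_inf, Subgroup.coe_subtype]
  constructor
  · rintro ⟨x, hx, rfl⟩
    refine ⟨?_, x.2⟩
    exact ucs_decomp H n hHZ n x (by simp) ⟨x, hx, 1, one_mem _, (mul_one _).symm⟩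
  · rintro ⟨hg, hgH⟩
    exact ⟨⟨g, hgH⟩, ucs_inf_le H n ⟨g, hgH⟩ hg, rfl⟩
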